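/- The word ABACABCB is a factor of P^n(A) for some n, but its reflection ACABACBC is not a factor of P^n(A) for any n, where ref swaps B and C and fixes A. -/

import Mathlib

inductive T where
  | A | B | C
deriving DecidableEq, Repr

open T

def P : T → List T
  | A => [A,B,C,B,A,C,B,C,A,B,C,B,A]
  | B => [B,C,A,C,B,A,C,A,B,C,A,C,B]
  | C => [C,A,B,A,C,B,A,B,C,A,B,A,C]

def Pw (w : List T) : List T := w.flatMap P

def SqFree (w : List T) : Prop := ∀ x : List T, x ≠ [] → ¬ (x ++ x) <:+: w

def rot : T → T
  | A => B
  | B => C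
  | C => A

def rotw (w : List T) : List T := w.map rot

def refT : T → T
  | A => A
  | B => C
  | C => B

def reflw (w : List T) : List T := w.map refT

def OccursAt (w v : List T) (i : ℕ) : Prop := (v.drop i).take w.length = w

theorem split_lemma {α} (x y z w : List α) (h : w <:+: x ++ (y ++ z))
    (hw : w.length ≤ y.length + 1) :
    w <:+: x ++ y ∨ w <:+: y ++ z := by
  obtain ⟨s, t, hst⟩ := h
  by_cases hs : x.length ≤ s.length
  · right
    have h2 : List.drop x.length (s ++ (w ++ t)) = y ++ z := by
      rw [← List.append_assoc, hst]; simp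
    rw [List.drop_append_of_le_length hs] at h2
    exact ⟨_, _, by rw [List.append_assoc]; exact h2⟩
  · left
    push_neg at hs
    have hlen : s.length + w.length ≤ x.length + y.length := by omega
    have h1 : List.take (s.length + w.length) (x ++ (y ++ z)) = s ++ w := by
      rw [← hst, show s.length + w.length = (s ++ w).length by simp]
      exact List.take_left
    have h2 : List.take (s.length + w.length) (x ++ (y ++ z))
        = List.take (s.length + w.length) (x ++ y) := by
      have e : s.length + w.length - x.length - y.length = 0 := by omega
      simp only [List.take_append, e, List.take_zero, List.append_nil]
    exact ⟨s, List.drop (s.length + w.length) (x ++ y), by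
      rw [h1.symm.trans h2, List.take_append_drop]⟩

instance : Fintype T := ⟨{A, B, C}, fun x => by cases x <;> simp⟩

theorem P_length (a : T) : (P a).length = 13 := by cases a <;> rfl

theorem block_lemma {w : List T} (hw : w.length ≤ 13) (hne : w ≠ []) :
    ∀ u : List T, w <:+: Pw u →
      (∃ a, a ∈ u ∧ w <:+: P a) ∨ (∃ a b, [a,b] <:+: u ∧ w <:+: P a ++ P b)
  | [] => by
    intro h
    simp only [Pw, List.flatMap_nil] at h
    exact absurd (by simpa using h : w = []) hne
  | [a] => by
    intro h
    simp only [Pw, List.flatMap_cons, List.flatMap_nil, List.append_nil] at h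
    exact Or.inl ⟨a, by simp, h⟩
  | a :: b :: vs => by
    intro h
    have hPw : Pw (a :: b :: vs) = P a ++ (P b ++ Pw vs) := by
      simp [Pw]
    rw [hPw] at h
    rcases split_lemma _ _ _ _ h (by rw [P_length]; omega) with h1 | h1
    · exact Or.inr ⟨a, b, ⟨[], vs, rfl⟩, h1⟩
    · have h2 : w <:+: Pw (b :: vs) := by simpa [Pw] using h1
      rcases block_lemma hw hne (b :: vs) h2 with ⟨c, hc, hw'⟩ | ⟨c, d, hcd, hw'⟩
      · exact Or.inl ⟨c, List.mem_cons_of_mem _ hc, hw'⟩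
      · exact Or.inr ⟨c, d, hcd.trans (List.infix_cons (List.infix_refl _)), hw'⟩

def NDbl (u : List T) : Prop := ∀ c : T, ¬ [c,c] <:+: u

theorem key1 : ∀ a c : T, ¬ [c,c] <:+: P a := by decide

theorem key2 : ∀ a b c : T, a ≠ b → ¬ [c,c] <:+: P a ++ P b := by decide

theorem key3 : ∀ a : T, ¬ [A,C,A,B,A,C,B,C] <:+: P a := by decide

theorem key4 : ∀ a b : T, a ≠ b → ¬ [A,C,A,B,A,C,B,C] <:+: P a ++ P b := by decide

theorem ndbl_step {u : List T} (h : NDbl u) : NDbl (Pw u) := by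
  intro c hc
  rcases block_lemma (by simp) (by simp) u hc with ⟨a, _, hw'⟩ | ⟨a, b, hab, hw'⟩
  · exact key1 a c hw'
  · exact key2 a b c (by rintro rfl; exact h a hab) hw'

theorem main_step {u : List T} (h : NDbl u) : ¬ [A,C,A,B,A,C,B,C] <:+: Pw u := by
  intro hc
  rcases block_lemma (by simp) (by simp) u hc with ⟨a, _, hw'⟩ | ⟨a, b, hab, hw'⟩
  · exact key3 a hw'
  · exact key4 a b (by rintro rfl; exact h a hab) hw'

theorem ndbl_iter : ∀ n : ℕ, NDbl (Pw^[n] [A])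
  | 0 => by
    intro c hc
    have := hc.length_le
    simp at this
  | n + 1 => by
    rw [Function.iterate_succ_apply']
    exact ndbl_step (ndbl_iter n)

theorem stmt9 :
    (∃ n : ℕ, [A,B,A,C,A,B,C,B] <:+: Pw^[n] [A]) ∧
    (∀ n : ℕ, ¬ [A,C,A,B,A,C,B,C] <:+: Pw^[n] [A]) := by
  constructor
  · exact ⟨2, [A,B,C,B,A,C,B,C,A,B,C,B,A,B,C,A,C,B,A,C,A,B,C,A,C,B,C,A,B,A,C,B,A,B,C,A,B,A,C,B,C,A,C,B,A,C,A,B,C,A,C,B,A,B,C,B,A,C,B,C,A,B,C,B,A,C,A,B,A,C,B,A,B,C,A,B,A,C,B,C,A,C,B,A,C,A,B,C,A,C,B,C,A,B,A,C,B,A,B,C], [A,C,B,C,A,B,C,B,A,B,C,A,C,B,A,C,A,B,C,A,C,B,C,A,B,A,C,B,A,B,C,A,B,A,C,B,C,A,C,B,A,C,A,B,C,A,C,B,A,B,C,B,A,C,B,C,A,B,C,B,A], by rfl⟩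
  · intro n
    cases n with
    | zero =>
      intro hc
      have := hc.length_le
      simp at this
    | succ n =>
      rw [Function.iterate_succ_apply']
      exact main_step (ndbl_iter n)
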